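/- Fix N ≥ 1, p ≥ 2, β ∈ ℝ, λ₁ ≥ 0, γ̃ > 0 and s ≥ 1, and let F be a bounded function of s configurations (σ^1,…,σ^s) ∈ ({−1,1}^N)^s. Let ⟨F⟩_t denote the quenched average E[ Ω̃_t(F) ], where Ω̃_t is the s-fold product of the t-perturbed Gibbs state (k₁ Poisson(λ₁) p-body terms plus k₂ Poisson(2γ̃t) (p−1)-body terms, index tuples i.i.d. uniform). Then t ↦ ⟨F⟩_t is differentiable on (0,∞) and d⟨F⟩_t/dt = 2γ̃ ( E[ N^{−(p−1)} Σ_{i₀ ∈ (Fin N)^{p−1}} Ω̃_t( F · Π_{a=1}^s (1 + θ c_a) ) / (1 + θ ω̃_t(c))^s ] − ⟨F⟩_t ), where c(σ) = σ(i₀(1))⋯σ(i₀(p−1)), c_a = c(σ^a), ω̃_t is the single-replica perturbed Gibbs average and θ = tanh β. (This is the exact streaming equation established in the proof of the paper's Proposition 1, before expansion in powers of θ.) -/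

import Mathlib

/-- Spin value (±1) of a Boolean; configurations on N sites are `Fin N → Bool`. -/
noncomputable def spin (b : Bool) : ℝ := if b then 1 else -1

/-- Interaction part (−H) of the t-perturbed diluted p-spin Hamiltonian: k₁ p-body
terms plus k₂ (p−1)-body cavity terms. -/
noncomputable def Hpert (N p : ℕ) (k₁ k₂ : ℕ) (i : Fin k₁ → Fin p → Fin N)
    (j : Fin k₂ → Fin (p - 1) → Fin N) (σ : Fin N → Bool) : ℝ :=
  (∑ ν : Fin k₁, ∏ l : Fin p, spin (σ (i ν l)))
    + ∑ ν : Fin k₂, ∏ l : Fin (p - 1), spin (σ (j ν l))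

/-- Partition function of the t-perturbed system. -/
noncomputable def Zpert (N p : ℕ) (β : ℝ) (k₁ k₂ : ℕ) (i : Fin k₁ → Fin p → Fin N)
    (j : Fin k₂ → Fin (p - 1) → Fin N) : ℝ :=
  ∑ σ : Fin N → Bool, Real.exp (β * Hpert N p k₁ k₂ i j σ)

/-- Single-replica perturbed Gibbs average ω̃. -/
noncomputable def omegaPert (N p : ℕ) (β : ℝ) (k₁ k₂ : ℕ) (i : Fin k₁ → Fin p → Fin N)
    (j : Fin k₂ → Fin (p - 1) → Fin N) (g : (Fin N → Bool) → ℝ) : ℝ :=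
  (∑ σ : Fin N → Bool, g σ * Real.exp (β * Hpert N p k₁ k₂ i j σ))
    / Zpert N p β k₁ k₂ i j

/-- s-fold replicated (product) perturbed Gibbs average Ω̃. -/
noncomputable def omegaPertRep (N p : ℕ) (β : ℝ) (s : ℕ) (k₁ k₂ : ℕ)
    (i : Fin k₁ → Fin p → Fin N) (j : Fin k₂ → Fin (p - 1) → Fin N)
    (g : (Fin s → (Fin N → Bool)) → ℝ) : ℝ :=
  (∑ σs : Fin s → (Fin N → Bool),
      g σs * ∏ a : Fin s, Real.exp (β * Hpert N p k₁ k₂ i j (σs a)))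
    / (Zpert N p β k₁ k₂ i j) ^ s

/-- Quenched expectation: k₁ Poisson of mean λ₁, k₂ Poisson of mean λ₂, all index
tuples i.i.d. uniform. -/
noncomputable def quenched2 (N p : ℕ) (lam₁ lam₂ : ℝ)
    (f : (k₁ : ℕ) → (k₂ : ℕ) → (Fin k₁ → Fin p → Fin N) →
          (Fin k₂ → Fin (p - 1) → Fin N) → ℝ) : ℝ :=
  ∑' k₁ : ℕ, ∑' k₂ : ℕ,
    (Real.exp (-lam₁) * lam₁ ^ k₁ / (Nat.factorial k₁ : ℝ)) *
      (Real.exp (-lam₂) * lam₂ ^ k₂ / (Nat.factorial k₂ : ℝ)) *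
        ((1 / (N : ℝ) ^ (p * k₁)) * (1 / (N : ℝ) ^ ((p - 1) * k₂)) *
          ∑ i : Fin k₁ → Fin p → Fin N, ∑ j : Fin k₂ → Fin (p - 1) → Fin N, f k₁ k₂ i j)

lemma abs_spin (b : Bool) : |spin b| = 1 := by cases b <;> simp [spin]

lemma spin_prod_pm {n : ℕ} (v : Fin n → Bool) :
    (∏ l, spin (v l)) = 1 ∨ (∏ l, spin (v l)) = -1 := by
  have h : |∏ l, spin (v l)| = 1 := by
    rw [Finset.abs_prod]
    simp [abs_spin]
  exact (abs_eq (by norm_num)).mp h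

lemma exp_pm (β x : ℝ) (hx : x = 1 ∨ x = -1) :
    Real.exp (β * x) = Real.cosh β * (1 + Real.tanh β * x) := by
  have hc := Real.cosh_pos β
  have ht : Real.tanh β * Real.cosh β = Real.sinh β := by
    rw [Real.tanh_eq_sinh_div_cosh]; field_simp
  rcases hx with h | h <;> subst h
  · simp only [mul_one]
    rw [← Real.cosh_add_sinh]
    linear_combination -ht
  · simp only [mul_neg_one]
    rw [← Real.cosh_sub_sinh]
    linear_combination ht

lemma abs_tanh_lt_one (β : ℝ) : |Real.tanh β| < 1 := by
  have hc := Real.cosh_pos β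
  have h1 : Real.sinh β < Real.cosh β := Real.sinh_lt_cosh β
  have h2 : -Real.cosh β < Real.sinh β := by
    have h : Real.sinh (-β) < Real.cosh (-β) := Real.sinh_lt_cosh (-β)
    rw [Real.sinh_neg, Real.cosh_neg] at h; linarith
  rw [Real.tanh_eq_sinh_div_cosh, abs_div, abs_of_pos hc, div_lt_one hc, abs_lt]
  exact ⟨h2, h1⟩

lemma Zpert_pos (N p : ℕ) (β : ℝ) (k₁ k₂ : ℕ) (i : Fin k₁ → Fin p → Fin N)
    (j : Fin k₂ → Fin (p - 1) → Fin N) : 0 < Zpert N p β k₁ k₂ i j :=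
  Finset.sum_pos (fun σ _ => Real.exp_pos _) Finset.univ_nonempty

lemma Zpert_rep (N p : ℕ) (β : ℝ) (s k₁ k₂ : ℕ) (i : Fin k₁ → Fin p → Fin N)
    (j : Fin k₂ → Fin (p - 1) → Fin N) :
    ∑ σs : Fin s → (Fin N → Bool), ∏ a : Fin s, Real.exp (β * Hpert N p k₁ k₂ i j (σs a))
      = (Zpert N p β k₁ k₂ i j) ^ s := by
  rw [Zpert, Fintype.sum_pow]

lemma abs_omegaPertRep_le (N p : ℕ) (β : ℝ) (s k₁ k₂ : ℕ)
    (i : Fin k₁ → Fin p → Fin N) (j : Fin k₂ → Fin (p - 1) → Fin N)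
    (g : (Fin s → (Fin N → Bool)) → ℝ) (C : ℝ) (hg : ∀ σs, |g σs| ≤ C) :
    |omegaPertRep N p β s k₁ k₂ i j g| ≤ C := by
  have hZ : 0 < (Zpert N p β k₁ k₂ i j) ^ s := pow_pos (Zpert_pos N p β k₁ k₂ i j) s
  rw [omegaPertRep, abs_div, abs_of_pos hZ, div_le_iff₀ hZ]
  calc |∑ σs : Fin s → (Fin N → Bool),
        g σs * ∏ a : Fin s, Real.exp (β * Hpert N p k₁ k₂ i j (σs a))|
      ≤ ∑ σs : Fin s → (Fin N → Bool),
        |g σs * ∏ a : Fin s, Real.exp (β * Hpert N p k₁ k₂ i j (σs a))| :=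
        Finset.abs_sum_le_sum_abs _ _
    _ ≤ ∑ σs : Fin s → (Fin N → Bool),
        C * ∏ a : Fin s, Real.exp (β * Hpert N p k₁ k₂ i j (σs a)) := by
        apply Finset.sum_le_sum; intro σs _
        rw [abs_mul]
        have hp0 : (0:ℝ) < ∏ a : Fin s, Real.exp (β * Hpert N p k₁ k₂ i j (σs a)) :=
          Finset.prod_pos fun a _ => Real.exp_pos _
        rw [abs_of_pos hp0]
        exact mul_le_mul_of_nonneg_right (hg σs) hp0.le
    _ = C * (Zpert N p β k₁ k₂ i j) ^ s := by rw [← Finset.mul_sum, Zpert_rep]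

lemma abs_omegaPert_le (N p : ℕ) (β : ℝ) (k₁ k₂ : ℕ)
    (i : Fin k₁ → Fin p → Fin N) (j : Fin k₂ → Fin (p - 1) → Fin N)
    (g : (Fin N → Bool) → ℝ) (C : ℝ) (hg : ∀ σ, |g σ| ≤ C) :
    |omegaPert N p β k₁ k₂ i j g| ≤ C := by
  have hZ : 0 < Zpert N p β k₁ k₂ i j := Zpert_pos N p β k₁ k₂ i j
  rw [omegaPert, abs_div, abs_of_pos hZ, div_le_iff₀ hZ]
  calc |∑ σ : Fin N → Bool, g σ * Real.exp (β * Hpert N p k₁ k₂ i j σ)|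
      ≤ ∑ σ : Fin N → Bool, |g σ * Real.exp (β * Hpert N p k₁ k₂ i j σ)| :=
        Finset.abs_sum_le_sum_abs _ _
    _ ≤ ∑ σ : Fin N → Bool, C * Real.exp (β * Hpert N p k₁ k₂ i j σ) := by
        apply Finset.sum_le_sum; intro σ _
        rw [abs_mul, abs_of_pos (Real.exp_pos _)]
        exact mul_le_mul_of_nonneg_right (hg σ) (Real.exp_pos _).le
    _ = C * Zpert N p β k₁ k₂ i j := by rw [← Finset.mul_sum, Zpert]

lemma one_add_tanh_pos (β x : ℝ) (hx : |x| ≤ 1) : 0 < 1 + Real.tanh β * x := by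
  have h := abs_tanh_lt_one β
  have h2 : |Real.tanh β * x| < 1 := by
    rw [abs_mul]
    calc |Real.tanh β| * |x| ≤ |Real.tanh β| * 1 :=
          mul_le_mul_of_nonneg_left hx (abs_nonneg _)
      _ = |Real.tanh β| := mul_one _
      _ < 1 := h
  have := (abs_lt.mp h2).1
  linarith

lemma spin_prod_abs_le {n N : ℕ} (i₀ : Fin n → Fin N) (σ : Fin N → Bool) :
    |∏ l : Fin n, spin (σ (i₀ l))| ≤ 1 := by
  rcases spin_prod_pm (fun l => σ (i₀ l)) with h | h <;> rw [h] <;> norm_num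

lemma cavity (N p : ℕ) (β : ℝ) (s k₁ k₂ : ℕ) (i : Fin k₁ → Fin p → Fin N)
    (j : Fin k₂ → Fin (p - 1) → Fin N) (i₀ : Fin (p - 1) → Fin N)
    (F : (Fin s → (Fin N → Bool)) → ℝ) :
    omegaPertRep N p β s k₁ (k₂ + 1) i (Fin.cons i₀ j) F =
      omegaPertRep N p β s k₁ k₂ i j
          (fun σs => F σs * ∏ a : Fin s,
            (1 + Real.tanh β * ∏ l : Fin (p - 1), spin (σs a (i₀ l))))
        / (1 + Real.tanh β *
            omegaPert N p β k₁ k₂ i j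
              (fun σ => ∏ l : Fin (p - 1), spin (σ (i₀ l)))) ^ s := by
  have hch : (0:ℝ) < Real.cosh β := Real.cosh_pos β
  have hZ0 : 0 < Zpert N p β k₁ k₂ i j := Zpert_pos N p β k₁ k₂ i j
  have hexp : ∀ σ : Fin N → Bool,
      Real.exp (β * Hpert N p k₁ (k₂ + 1) i (Fin.cons i₀ j) σ)
        = Real.cosh β * ((1 + Real.tanh β * ∏ l : Fin (p - 1), spin (σ (i₀ l)))
            * Real.exp (β * Hpert N p k₁ k₂ i j σ)) := by
    intro σ
    have hH : Hpert N p k₁ (k₂ + 1) i (Fin.cons i₀ j) σ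
        = Hpert N p k₁ k₂ i j σ + ∏ l : Fin (p - 1), spin (σ (i₀ l)) := by
      simp only [Hpert, Fin.sum_univ_succ, Fin.cons_zero, Fin.cons_succ]
      ring
    rw [hH, mul_add, Real.exp_add, exp_pm β _ (spin_prod_pm fun l => σ (i₀ l))]
    ring
  have key1 : Zpert N p β k₁ (k₂ + 1) i (Fin.cons i₀ j)
      = Real.cosh β * (Zpert N p β k₁ k₂ i j
          + Real.tanh β * ∑ σ : Fin N → Bool,
              (∏ l : Fin (p - 1), spin (σ (i₀ l))) * Real.exp (β * Hpert N p k₁ k₂ i j σ)) := by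
    rw [Zpert]
    simp only [hexp]
    rw [← Finset.mul_sum]
    congr 1
    rw [Zpert, Finset.mul_sum, ← Finset.sum_add_distrib]
    refine Finset.sum_congr rfl fun σ _ => ?_
    ring
  have key2 : ∑ σs : Fin s → (Fin N → Bool),
        F σs * ∏ a : Fin s, Real.exp (β * Hpert N p k₁ (k₂ + 1) i (Fin.cons i₀ j) (σs a))
      = Real.cosh β ^ s * ∑ σs : Fin s → (Fin N → Bool),
          (F σs * ∏ a : Fin s,
            (1 + Real.tanh β * ∏ l : Fin (p - 1), spin (σs a (i₀ l))))
            * ∏ a : Fin s, Real.exp (β * Hpert N p k₁ k₂ i j (σs a)) := by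
    rw [Finset.mul_sum]
    refine Finset.sum_congr rfl fun σs _ => ?_
    simp only [hexp]
    rw [Finset.prod_mul_distrib, Finset.prod_const, Finset.prod_mul_distrib,
      Finset.card_univ, Fintype.card_fin]
    ring
  have hωle : |omegaPert N p β k₁ k₂ i j (fun σ => ∏ l : Fin (p - 1), spin (σ (i₀ l)))| ≤ 1 :=
    abs_omegaPert_le N p β k₁ k₂ i j _ 1 fun σ => spin_prod_abs_le i₀ σ
  have hD0 : 0 < 1 + Real.tanh β *
      omegaPert N p β k₁ k₂ i j (fun σ => ∏ l : Fin (p - 1), spin (σ (i₀ l))) :=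
    one_add_tanh_pos β _ hωle
  rw [omegaPertRep, key2, key1, omegaPertRep]
  have hS : omegaPert N p β k₁ k₂ i j (fun σ => ∏ l : Fin (p - 1), spin (σ (i₀ l)))
      = (∑ σ : Fin N → Bool,
          (∏ l : Fin (p - 1), spin (σ (i₀ l))) * Real.exp (β * Hpert N p k₁ k₂ i j σ))
        / Zpert N p β k₁ k₂ i j := by rw [omegaPert]
  set S := ∑ σ : Fin N → Bool,
      (∏ l : Fin (p - 1), spin (σ (i₀ l))) * Real.exp (β * Hpert N p k₁ k₂ i j σ) with hSdef
  set Z := Zpert N p β k₁ k₂ i j with hZdef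
  set Num := ∑ σs : Fin s → (Fin N → Bool),
      (F σs * ∏ a : Fin s,
        (1 + Real.tanh β * ∏ l : Fin (p - 1), spin (σs a (i₀ l))))
        * ∏ a : Fin s, Real.exp (β * Hpert N p k₁ k₂ i j (σs a)) with hNumdef
  rw [hS] at hD0 ⊢
  have hZS : 0 < Z + Real.tanh β * S := by
    have h : Z + Real.tanh β * S = Z * (1 + Real.tanh β * (S / Z)) := by
      field_simp
    rw [h]
    exact mul_pos hZ0 hD0
  rw [mul_pow]
  have e1 : 1 + Real.tanh β * (S / Z) = (Z + Real.tanh β * S) / Z := by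
    field_simp
  rw [e1, div_pow]
  have h1 : (Z + Real.tanh β * S) ^ s ≠ 0 := pow_ne_zero s hZS.ne'
  have h2 : Z ^ s ≠ 0 := pow_ne_zero s hZ0.ne'
  have h3 : Real.cosh β ^ s ≠ 0 := pow_ne_zero s hch.ne'
  field_simp

lemma sum_consEquiv {k : ℕ} {X M : Type*} [Fintype X] [AddCommMonoid M]
    (f : (Fin (k + 1) → X) → M) :
    ∑ v : Fin (k + 1) → X, f v = ∑ x : X, ∑ g : Fin k → X, f (Fin.cons x g) := by
  rw [← Equiv.sum_comp (Fin.consEquiv (fun _ : Fin (k + 1) => X)) f, Fintype.sum_prod_type]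
  rfl

lemma abs_avg_le (N p k₁ k₂ : ℕ) (hN : 1 ≤ N)
    (g : (Fin k₁ → Fin p → Fin N) → (Fin k₂ → Fin (p - 1) → Fin N) → ℝ)
    (C : ℝ) (hg : ∀ i j, |g i j| ≤ C) :
    |(1 / (N : ℝ) ^ (p * k₁)) * (1 / (N : ℝ) ^ ((p - 1) * k₂)) *
      ∑ i : Fin k₁ → Fin p → Fin N, ∑ j : Fin k₂ → Fin (p - 1) → Fin N, g i j| ≤ C := by
  have hN0 : (0:ℝ) < (N : ℝ) := by exact_mod_cast hN
  have hP : (0:ℝ) < (N : ℝ) ^ (p * k₁) := pow_pos hN0 _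
  have hQ : (0:ℝ) < (N : ℝ) ^ ((p - 1) * k₂) := pow_pos hN0 _
  have hcard1 : ((Fintype.card (Fin k₁ → Fin p → Fin N) : ℕ) : ℝ) = (N : ℝ) ^ (p * k₁) := by
    simp only [Fintype.card_fun, Fintype.card_fin]
    push_cast
    rw [pow_mul]
  have hcard2 : ((Fintype.card (Fin k₂ → Fin (p - 1) → Fin N) : ℕ) : ℝ)
      = (N : ℝ) ^ ((p - 1) * k₂) := by
    simp only [Fintype.card_fun, Fintype.card_fin]
    push_cast
    rw [pow_mul]
  have h1 : |∑ i : Fin k₁ → Fin p → Fin N, ∑ j : Fin k₂ → Fin (p - 1) → Fin N, g i j|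
      ≤ (N : ℝ) ^ (p * k₁) * ((N : ℝ) ^ ((p - 1) * k₂) * C) := by
    calc |∑ i : Fin k₁ → Fin p → Fin N, ∑ j : Fin k₂ → Fin (p - 1) → Fin N, g i j|
        ≤ ∑ i : Fin k₁ → Fin p → Fin N, |∑ j : Fin k₂ → Fin (p - 1) → Fin N, g i j| :=
          Finset.abs_sum_le_sum_abs _ _
      _ ≤ ∑ _i : Fin k₁ → Fin p → Fin N, (N : ℝ) ^ ((p - 1) * k₂) * C := by
          apply Finset.sum_le_sum
          intro i _
          calc |∑ j : Fin k₂ → Fin (p - 1) → Fin N, g i j|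
              ≤ ∑ j : Fin k₂ → Fin (p - 1) → Fin N, |g i j| := Finset.abs_sum_le_sum_abs _ _
            _ ≤ ∑ _j : Fin k₂ → Fin (p - 1) → Fin N, C := Finset.sum_le_sum fun j _ => hg i j
            _ = (N : ℝ) ^ ((p - 1) * k₂) * C := by
                rw [Finset.sum_const, Finset.card_univ, nsmul_eq_mul, hcard2]
      _ = (N : ℝ) ^ (p * k₁) * ((N : ℝ) ^ ((p - 1) * k₂) * C) := by
          rw [Finset.sum_const, Finset.card_univ, nsmul_eq_mul, hcard1]
  rw [abs_mul, abs_mul, abs_of_nonneg (by positivity : (0:ℝ) ≤ 1 / (N:ℝ) ^ (p * k₁)),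
    abs_of_nonneg (by positivity : (0:ℝ) ≤ 1 / (N:ℝ) ^ ((p - 1) * k₂))]
  calc 1 / (N:ℝ) ^ (p * k₁) * (1 / (N:ℝ) ^ ((p - 1) * k₂)) *
        |∑ i : Fin k₁ → Fin p → Fin N, ∑ j : Fin k₂ → Fin (p - 1) → Fin N, g i j|
      ≤ 1 / (N:ℝ) ^ (p * k₁) * (1 / (N:ℝ) ^ ((p - 1) * k₂)) *
        ((N : ℝ) ^ (p * k₁) * ((N : ℝ) ^ ((p - 1) * k₂) * C)) :=
        mul_le_mul_of_nonneg_left h1 (by positivity)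
    _ = C := by field_simp

lemma key_term (N p : ℕ) (hN : 1 ≤ N) (β : ℝ) (s k₁ k₂ : ℕ)
    (F : (Fin s → (Fin N → Bool)) → ℝ) :
    (1 / (N : ℝ) ^ (p * k₁)) * (1 / (N : ℝ) ^ ((p - 1) * k₂)) *
        ∑ i : Fin k₁ → Fin p → Fin N, ∑ j : Fin k₂ → Fin (p - 1) → Fin N,
          ((1 / (N : ℝ) ^ (p - 1)) * ∑ i₀ : Fin (p - 1) → Fin N,
              omegaPertRep N p β s k₁ k₂ i j
                  (fun σs => F σs * ∏ a : Fin s,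
                    (1 + Real.tanh β * ∏ l : Fin (p - 1), spin (σs a (i₀ l))))
                / (1 + Real.tanh β *
                    omegaPert N p β k₁ k₂ i j
                      (fun σ => ∏ l : Fin (p - 1), spin (σ (i₀ l)))) ^ s)
      = (1 / (N : ℝ) ^ (p * k₁)) * (1 / (N : ℝ) ^ ((p - 1) * (k₂ + 1))) *
        ∑ i : Fin k₁ → Fin p → Fin N, ∑ j : Fin (k₂ + 1) → Fin (p - 1) → Fin N,
          omegaPertRep N p β s k₁ (k₂ + 1) i j F := by
  have hN0 : (0:ℝ) < (N : ℝ) := by exact_mod_cast hN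
  have hsum : ∀ i : Fin k₁ → Fin p → Fin N,
      ∑ j : Fin (k₂ + 1) → Fin (p - 1) → Fin N, omegaPertRep N p β s k₁ (k₂ + 1) i j F
      = ∑ j : Fin k₂ → Fin (p - 1) → Fin N, ∑ i₀ : Fin (p - 1) → Fin N,
          omegaPertRep N p β s k₁ k₂ i j
              (fun σs => F σs * ∏ a : Fin s,
                (1 + Real.tanh β * ∏ l : Fin (p - 1), spin (σs a (i₀ l))))
            / (1 + Real.tanh β *
                omegaPert N p β k₁ k₂ i j
                  (fun σ => ∏ l : Fin (p - 1), spin (σ (i₀ l)))) ^ s := by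
    intro i
    rw [sum_consEquiv (fun v => omegaPertRep N p β s k₁ (k₂ + 1) i v F), Finset.sum_comm]
    exact Finset.sum_congr rfl fun j _ => Finset.sum_congr rfl fun i₀ _ =>
      cavity N p β s k₁ k₂ i j i₀ F
  simp only [hsum]
  simp only [← Finset.mul_sum]
  have hpow : (N : ℝ) ^ ((p - 1) * (k₂ + 1)) = (N : ℝ) ^ ((p - 1) * k₂) * (N : ℝ) ^ (p - 1) := by
    rw [Nat.mul_succ, pow_add]
  rw [hpow, ← one_div_mul_one_div]
  ring

lemma hasDerivAt_series (d : ℕ → ℝ) (C : ℝ) (hd : ∀ k, |d k| ≤ C) (x : ℝ) :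
    HasDerivAt (fun y : ℝ => ∑' k : ℕ, d k * (y ^ k / (Nat.factorial k : ℝ)))
      (∑' k : ℕ, d (k + 1) * (x ^ k / (Nat.factorial k : ℝ))) x := by
  have hC0 : 0 ≤ C := le_trans (abs_nonneg _) (hd 0)
  set R : ℝ := |x| + 1 with hR
  have hR0 : 0 < R := by positivity
  set u : ℕ → ℝ := fun k => C * ((k : ℝ) * R ^ (k - 1) / (Nat.factorial k : ℝ)) with hu
  have hu_sum : Summable u := by
    rw [← summable_nat_add_iff 1]
    have he : (fun n : ℕ => u (n + 1)) = fun n : ℕ => C * (R ^ n / (Nat.factorial n : ℝ)) := by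
      funext n
      simp only [hu, Nat.add_sub_cancel, Nat.factorial_succ]
      have h1 : ((n + 1 : ℕ) : ℝ) ≠ 0 := by positivity
      have h2 : ((Nat.factorial n : ℕ) : ℝ) ≠ 0 := by positivity
      push_cast
      field_simp <;> ring
    rw [he]
    exact (Real.summable_pow_div_factorial R).mul_left C
  set g' : ℕ → ℝ → ℝ := fun k y => d k * ((k : ℝ) * y ^ (k - 1) / (Nat.factorial k : ℝ))
    with hg'
  have hderiv : ∀ (k : ℕ) (y : ℝ),
      HasDerivAt (fun z : ℝ => d k * (z ^ k / (Nat.factorial k : ℝ))) (g' k y) y := by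
    intro k y
    have h1 : HasDerivAt (fun z : ℝ => z ^ k) ((k : ℝ) * y ^ (k - 1)) y := hasDerivAt_pow k y
    have h2 := (h1.div_const (Nat.factorial k : ℝ)).const_mul (d k)
    convert h2 using 1
  have hbound : ∀ (k : ℕ), ∀ y ∈ Metric.ball (0 : ℝ) R, ‖g' k y‖ ≤ u k := by
    intro k y hy
    have hyR : |y| ≤ R := by
      rw [Metric.mem_ball, Real.dist_eq, sub_zero] at hy
      exact hy.le
    simp only [hg', hu, Real.norm_eq_abs]
    rw [abs_mul]
    have hfac : (0:ℝ) < (Nat.factorial k : ℝ) := by positivity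
    have h3 : |(k : ℝ) * y ^ (k - 1) / (Nat.factorial k : ℝ)|
        ≤ (k : ℝ) * R ^ (k - 1) / (Nat.factorial k : ℝ) := by
      rw [abs_div, abs_mul, abs_pow, Nat.abs_cast, abs_of_pos hfac]
      gcongr
    exact mul_le_mul (hd k) h3 (abs_nonneg _) hC0
  have hx_mem : x ∈ Metric.ball (0 : ℝ) R := by
    rw [Metric.mem_ball, Real.dist_eq, sub_zero, hR]
    linarith [abs_nonneg x]
  have hsum0 : Summable (fun k : ℕ => d k * (x ^ k / (Nat.factorial k : ℝ))) := by
    apply Summable.of_norm_bounded (g := fun k : ℕ => C * (|x| ^ k / (Nat.factorial k : ℝ)))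
      ((Real.summable_pow_div_factorial |x|).mul_left C)
    intro k
    rw [Real.norm_eq_abs, abs_mul, abs_div, abs_pow, abs_of_pos (by positivity :
      (0:ℝ) < (Nat.factorial k : ℝ))]
    exact mul_le_mul (hd k) le_rfl (by positivity) hC0
  have H := hasDerivAt_tsum_of_isPreconnected hu_sum Metric.isOpen_ball
    (convex_ball (0 : ℝ) R).isPreconnected (fun k y _ => hderiv k y) hbound hx_mem hsum0 hx_mem
  convert H using 1
  · rfl
  · rfl
  have hsum' : Summable (fun k => g' k x) :=
    Summable.of_norm_bounded hu_sum fun k => hbound k x hx_mem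
  rw [Summable.tsum_eq_zero_add hsum']
  have h0 : g' 0 x = 0 := by simp [hg']
  rw [h0, zero_add]
  apply tsum_congr
  intro n
  simp only [hg', Nat.add_sub_cancel, Nat.factorial_succ]
  have h2 : ((Nat.factorial n : ℕ) : ℝ) ≠ 0 := by positivity
  push_cast
  field_simp <;> ring

lemma rep_lemma (lam₁ : ℝ) (hlam₁ : 0 ≤ lam₁) (lam₂ : ℝ) (B : ℕ → ℕ → ℝ) (M : ℝ)
    (hB : ∀ k₁ k₂, |B k₁ k₂| ≤ M) :
    (∑' k₁ : ℕ, ∑' k₂ : ℕ,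
        (Real.exp (-lam₁) * lam₁ ^ k₁ / (Nat.factorial k₁ : ℝ)) *
          (Real.exp (-lam₂) * lam₂ ^ k₂ / (Nat.factorial k₂ : ℝ)) * B k₁ k₂)
      = Real.exp (-lam₂) * ∑' k₂ : ℕ,
          (∑' k₁ : ℕ, (Real.exp (-lam₁) * lam₁ ^ k₁ / (Nat.factorial k₁ : ℝ)) * B k₁ k₂) *
            (lam₂ ^ k₂ / (Nat.factorial k₂ : ℝ)) := by
  have hM0 : 0 ≤ M := le_trans (abs_nonneg _) (hB 0 0)
  set a : ℕ → ℝ := fun k => Real.exp (-lam₁) * lam₁ ^ k / (Nat.factorial k : ℝ) with ha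
  set b : ℕ → ℝ := fun k => Real.exp (-lam₂) * lam₂ ^ k / (Nat.factorial k : ℝ) with hb
  have ha0 : ∀ k, 0 ≤ a k := fun k => by
    simp only [ha]; positivity
  have haS : Summable a := by
    have he : a = fun k => Real.exp (-lam₁) * (lam₁ ^ k / (Nat.factorial k : ℝ)) := by
      funext k; simp only [ha]; ring
    rw [he]
    exact (Real.summable_pow_div_factorial lam₁).mul_left _
  have hbS : Summable fun k => |b k| * M := by
    have he : (fun k => |b k| * M)
        = fun k => (Real.exp (-lam₂) * M) * (|lam₂| ^ k / (Nat.factorial k : ℝ)) := by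
      funext k
      simp only [hb, abs_div, abs_mul, abs_pow, abs_of_pos (Real.exp_pos _),
        abs_of_pos (by positivity : (0:ℝ) < (Nat.factorial k : ℝ))]
      ring
    rw [he]
    exact (Real.summable_pow_div_factorial |lam₂|).mul_left _
  set f : ℕ → ℕ → ℝ := fun k₁ k₂ => a k₁ * b k₂ * B k₁ k₂ with hf
  have habs : ∀ q : ℕ × ℕ, ‖f q.1 q.2‖ ≤ a q.1 * (|b q.2| * M) := by
    intro q
    rw [Real.norm_eq_abs]
    simp only [hf]
    rw [abs_mul, abs_mul, abs_of_nonneg (ha0 q.1), mul_assoc]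
    exact mul_le_mul_of_nonneg_left
      (mul_le_mul_of_nonneg_left (hB q.1 q.2) (abs_nonneg _)) (ha0 q.1)
  have hsum2 : Summable (fun q : ℕ × ℕ => a q.1 * (|b q.2| * M)) :=
    haS.mul_of_nonneg hbS ha0 fun k => mul_nonneg (abs_nonneg _) hM0
  have hfS : Summable (Function.uncurry f) :=
    Summable.of_norm_bounded hsum2 habs
  have h₁ : ∀ k₁, Summable (f k₁) := fun k₁ => hfS.prod_factor k₁
  have h₂ : ∀ k₂, Summable fun k₁ => f k₁ k₂ := by
    intro k₂
    apply Summable.of_norm_bounded (g := fun k₁ => a k₁ * (|b k₂| * M)) (haS.mul_right _)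
    intro k₁
    exact habs (k₁, k₂)
  have hswap : (∑' k₁, ∑' k₂, f k₁ k₂) = ∑' k₂, ∑' k₁, f k₁ k₂ := (Summable.tsum_comm' hfS h₁ h₂).symm
  calc (∑' k₁ : ℕ, ∑' k₂ : ℕ, a k₁ * b k₂ * B k₁ k₂)
      = ∑' k₂, ∑' k₁, f k₁ k₂ := hswap
    _ = ∑' k₂, b k₂ * ∑' k₁, a k₁ * B k₁ k₂ := by
        apply tsum_congr; intro k₂
        rw [← tsum_mul_left]
        apply tsum_congr; intro k₁
        simp only [hf]; ring
    _ = Real.exp (-lam₂) * ∑' k₂ : ℕ,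
          (∑' k₁ : ℕ, a k₁ * B k₁ k₂) * (lam₂ ^ k₂ / (Nat.factorial k₂ : ℝ)) := by
        rw [← tsum_mul_left]
        apply tsum_congr; intro k₂
        simp only [hb]; ring

noncomputable def Aq (N p : ℕ) (β : ℝ) (s : ℕ)
    (F : (Fin s → (Fin N → Bool)) → ℝ) (k₁ k₂ : ℕ) : ℝ :=
  (1 / (N : ℝ) ^ (p * k₁)) * (1 / (N : ℝ) ^ ((p - 1) * k₂)) *
    ∑ i : Fin k₁ → Fin p → Fin N, ∑ j : Fin k₂ → Fin (p - 1) → Fin N,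
      omegaPertRep N p β s k₁ k₂ i j F

noncomputable def dq (N p : ℕ) (β : ℝ) (s : ℕ) (lam₁ : ℝ)
    (F : (Fin s → (Fin N → Bool)) → ℝ) (k₂ : ℕ) : ℝ :=
  ∑' k₁ : ℕ, (Real.exp (-lam₁) * lam₁ ^ k₁ / (Nat.factorial k₁ : ℝ)) * Aq N p β s F k₁ k₂

/-- The exact streaming equation for the quenched replicated average ⟨F⟩_t of a bounded
function F of s replicas, before any expansion in powers of θ = tanh β. -/
theorem streaming_equation (N p : ℕ) (hN : 1 ≤ N) (hp : 2 ≤ p) (β : ℝ)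
    (lam₁ gam : ℝ) (hlam₁ : 0 ≤ lam₁) (hgam : 0 < gam) (s : ℕ) (hs : 1 ≤ s)
    (F : (Fin s → (Fin N → Bool)) → ℝ) (M : ℝ) (hF : ∀ σs, |F σs| ≤ M)
    (t : ℝ) (ht : 0 < t) :
    HasDerivAt
      (fun u : ℝ => quenched2 N p lam₁ (2 * gam * u)
        (fun k₁ k₂ i j => omegaPertRep N p β s k₁ k₂ i j F))
      (2 * gam *
        (quenched2 N p lam₁ (2 * gam * t) (fun k₁ k₂ i j =>
            (1 / (N : ℝ) ^ (p - 1)) * ∑ i₀ : Fin (p - 1) → Fin N,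
              omegaPertRep N p β s k₁ k₂ i j
                  (fun σs => F σs * ∏ a : Fin s,
                    (1 + Real.tanh β * ∏ l : Fin (p - 1), spin (σs a (i₀ l))))
                / (1 + Real.tanh β *
                    omegaPert N p β k₁ k₂ i j
                      (fun σ => ∏ l : Fin (p - 1), spin (σ (i₀ l)))) ^ s)
          - quenched2 N p lam₁ (2 * gam * t)
              (fun k₁ k₂ i j => omegaPertRep N p β s k₁ k₂ i j F)))
      t := by
  classical
  have hM0 : 0 ≤ M := le_trans (abs_nonneg _) (hF fun _ _ => false)
  have hAle : ∀ k₁ k₂, |Aq N p β s F k₁ k₂| ≤ M := fun k₁ k₂ =>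
    abs_avg_le N p k₁ k₂ hN _ M fun i j => abs_omegaPertRep_le N p β s k₁ k₂ i j F M hF
  -- Poisson weights for lam₁
  have ha0 : ∀ k : ℕ, 0 ≤ Real.exp (-lam₁) * lam₁ ^ k / (Nat.factorial k : ℝ) := fun k => by
    positivity
  have haS : Summable (fun k : ℕ => Real.exp (-lam₁) * lam₁ ^ k / (Nat.factorial k : ℝ)) := by
    have he : (fun k : ℕ => Real.exp (-lam₁) * lam₁ ^ k / (Nat.factorial k : ℝ))
        = fun k => Real.exp (-lam₁) * (lam₁ ^ k / (Nat.factorial k : ℝ)) := by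
      funext k; ring
    rw [he]; exact (Real.summable_pow_div_factorial lam₁).mul_left _
  set Ca : ℝ := (∑' k : ℕ, Real.exp (-lam₁) * lam₁ ^ k / (Nat.factorial k : ℝ)) * M with hCa
  have hdle : ∀ k, |dq N p β s lam₁ F k| ≤ Ca := by
    intro k
    have hnorm : ∀ k₁ : ℕ,
        ‖(Real.exp (-lam₁) * lam₁ ^ k₁ / (Nat.factorial k₁ : ℝ)) * Aq N p β s F k₁ k‖
          ≤ (Real.exp (-lam₁) * lam₁ ^ k₁ / (Nat.factorial k₁ : ℝ)) * M := by
      intro k₁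
      rw [Real.norm_eq_abs, abs_mul, abs_of_nonneg (ha0 k₁)]
      exact mul_le_mul_of_nonneg_left (hAle k₁ k) (ha0 k₁)
    have hS1 : Summable (fun k₁ : ℕ =>
        (Real.exp (-lam₁) * lam₁ ^ k₁ / (Nat.factorial k₁ : ℝ)) * M) := haS.mul_right M
    have hS2 : Summable (fun k₁ : ℕ =>
        ‖(Real.exp (-lam₁) * lam₁ ^ k₁ / (Nat.factorial k₁ : ℝ)) * Aq N p β s F k₁ k‖) :=
      Summable.of_nonneg_of_le (fun _ => norm_nonneg _) hnorm hS1
    calc |dq N p β s lam₁ F k|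
        ≤ ∑' k₁ : ℕ,
            ‖(Real.exp (-lam₁) * lam₁ ^ k₁ / (Nat.factorial k₁ : ℝ)) * Aq N p β s F k₁ k‖ :=
          norm_tsum_le_tsum_norm hS2
      _ ≤ ∑' k₁ : ℕ, (Real.exp (-lam₁) * lam₁ ^ k₁ / (Nat.factorial k₁ : ℝ)) * M :=
          Summable.tsum_le_tsum hnorm hS2 hS1
      _ = Ca := by rw [hCa, tsum_mul_right]
  have hfun : ∀ u : ℝ,
      quenched2 N p lam₁ (2 * gam * u) (fun k₁ k₂ i j => omegaPertRep N p β s k₁ k₂ i j F)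
        = Real.exp (-(2 * gam * u)) *
            ∑' k : ℕ, dq N p β s lam₁ F k * ((2 * gam * u) ^ k / (Nat.factorial k : ℝ)) := by
    intro u
    rw [quenched2]
    exact rep_lemma lam₁ hlam₁ (2 * gam * u) (Aq N p β s F) M hAle
  have hg := hasDerivAt_series (dq N p β s lam₁ F) Ca hdle (2 * gam * t)
  have h2g : HasDerivAt (fun u : ℝ => 2 * gam * u) (2 * gam) t := by
    simpa using (hasDerivAt_id t).const_mul (2 * gam)
  have hGc := hg.comp t h2g
  have hexp : HasDerivAt (fun u : ℝ => Real.exp (-(2 * gam * u)))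
      (Real.exp (-(2 * gam * t)) * -(2 * gam)) t := by
    simpa [Function.comp_def, Pi.neg_apply] using (Real.hasDerivAt_exp (-(2 * gam * t))).comp t h2g.neg
  have hmul := hexp.mul hGc
  have hmul' : HasDerivAt
      (fun u : ℝ => Real.exp (-(2 * gam * u)) *
        ∑' k : ℕ, dq N p β s lam₁ F k * ((2 * gam * u) ^ k / (Nat.factorial k : ℝ)))
      ((Real.exp (-(2 * gam * t)) * -(2 * gam)) *
          (∑' k : ℕ, dq N p β s lam₁ F k * ((2 * gam * t) ^ k / (Nat.factorial k : ℝ)))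
        + Real.exp (-(2 * gam * t)) *
          ((∑' k : ℕ, dq N p β s lam₁ F (k + 1) * ((2 * gam * t) ^ k / (Nat.factorial k : ℝ)))
            * (2 * gam))) t := hmul
  have heq : (fun u : ℝ => quenched2 N p lam₁ (2 * gam * u)
      (fun k₁ k₂ i j => omegaPertRep N p β s k₁ k₂ i j F))
      = fun u : ℝ => Real.exp (-(2 * gam * u)) *
          ∑' k : ℕ, dq N p β s lam₁ F k * ((2 * gam * u) ^ k / (Nat.factorial k : ℝ)) :=
    funext hfun
  rw [heq]
  have hQcav : quenched2 N p lam₁ (2 * gam * t) (fun k₁ k₂ i j =>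
        (1 / (N : ℝ) ^ (p - 1)) * ∑ i₀ : Fin (p - 1) → Fin N,
          omegaPertRep N p β s k₁ k₂ i j
              (fun σs => F σs * ∏ a : Fin s,
                (1 + Real.tanh β * ∏ l : Fin (p - 1), spin (σs a (i₀ l))))
            / (1 + Real.tanh β *
                omegaPert N p β k₁ k₂ i j
                  (fun σ => ∏ l : Fin (p - 1), spin (σ (i₀ l)))) ^ s)
      = Real.exp (-(2 * gam * t)) *
          ∑' k : ℕ, dq N p β s lam₁ F (k + 1) * ((2 * gam * t) ^ k / (Nat.factorial k : ℝ)) := by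
    rw [quenched2]
    calc (∑' k₁ : ℕ, ∑' k₂ : ℕ,
          (Real.exp (-lam₁) * lam₁ ^ k₁ / (Nat.factorial k₁ : ℝ)) *
            (Real.exp (-(2 * gam * t)) * (2 * gam * t) ^ k₂ / (Nat.factorial k₂ : ℝ)) *
              ((1 / (N : ℝ) ^ (p * k₁)) * (1 / (N : ℝ) ^ ((p - 1) * k₂)) *
                ∑ i : Fin k₁ → Fin p → Fin N, ∑ j : Fin k₂ → Fin (p - 1) → Fin N,
                  ((1 / (N : ℝ) ^ (p - 1)) * ∑ i₀ : Fin (p - 1) → Fin N,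
                    omegaPertRep N p β s k₁ k₂ i j
                        (fun σs => F σs * ∏ a : Fin s,
                          (1 + Real.tanh β * ∏ l : Fin (p - 1), spin (σs a (i₀ l))))
                      / (1 + Real.tanh β *
                          omegaPert N p β k₁ k₂ i j
                            (fun σ => ∏ l : Fin (p - 1), spin (σ (i₀ l)))) ^ s)))
        = ∑' k₁ : ℕ, ∑' k₂ : ℕ,
            (Real.exp (-lam₁) * lam₁ ^ k₁ / (Nat.factorial k₁ : ℝ)) *
              (Real.exp (-(2 * gam * t)) * (2 * gam * t) ^ k₂ / (Nat.factorial k₂ : ℝ)) *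
                Aq N p β s F k₁ (k₂ + 1) := by
          apply tsum_congr; intro k₁; apply tsum_congr; intro k₂
          congr 1
          exact key_term N p hN β s k₁ k₂ F
      _ = Real.exp (-(2 * gam * t)) *
            ∑' k : ℕ, dq N p β s lam₁ F (k + 1) *
              ((2 * gam * t) ^ k / (Nat.factorial k : ℝ)) :=
          rep_lemma lam₁ hlam₁ (2 * gam * t) (fun k₁ k₂ => Aq N p β s F k₁ (k₂ + 1)) M
            (fun k₁ k₂ => hAle k₁ (k₂ + 1))
  have hval : 2 * gam *
      (quenched2 N p lam₁ (2 * gam * t) (fun k₁ k₂ i j =>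
          (1 / (N : ℝ) ^ (p - 1)) * ∑ i₀ : Fin (p - 1) → Fin N,
            omegaPertRep N p β s k₁ k₂ i j
                (fun σs => F σs * ∏ a : Fin s,
                  (1 + Real.tanh β * ∏ l : Fin (p - 1), spin (σs a (i₀ l))))
              / (1 + Real.tanh β *
                  omegaPert N p β k₁ k₂ i j
                    (fun σ => ∏ l : Fin (p - 1), spin (σ (i₀ l)))) ^ s)
        - quenched2 N p lam₁ (2 * gam * t)
            (fun k₁ k₂ i j => omegaPertRep N p β s k₁ k₂ i j F))
      = (Real.exp (-(2 * gam * t)) * -(2 * gam)) *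
          (∑' k : ℕ, dq N p β s lam₁ F k * ((2 * gam * t) ^ k / (Nat.factorial k : ℝ)))
        + Real.exp (-(2 * gam * t)) *
          ((∑' k : ℕ, dq N p β s lam₁ F (k + 1) * ((2 * gam * t) ^ k / (Nat.factorial k : ℝ)))
            * (2 * gam)) := by
    rw [hQcav, hfun t]
    ring
  rw [hval]
  exact hmul'
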